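/- Let f be analytic in an open set N ⊂ ℂ containing a compact interval I ⊂ ℝ, with rc(f,x) > 0 for every x ∈ I. Then ρ₀ := inf_{x∈I} rc(f,x) > 0, and ρ₀ equals the radius of convergence of the series Σ_{k≥1} d_k z^k with d_k = sup_{x∈I}|f^{(k)}(x)|/k!. -/

import Mathlib

set_option maxHeartbeats 1000000

open scoped ENNReal NNReal

lemma aux_norm_coeff {f : ℂ → ℂ} {p : FormalMultilinearSeries ℂ ℂ ℂ} {x : ℂ}
    (h : HasFPowerSeriesAt f p x) (n : ℕ) :
    ‖p n‖ = ‖iteratedDeriv n f x‖ / n.factorial := by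
  obtain ⟨r, hr⟩ := h
  have h1 := hr.factorial_smul (1 : ℂ) n
  rw [iteratedDeriv_eq_iteratedFDeriv, p.norm_apply_eq_norm_coef, ← h1]
  have h2 : (p n fun _ => 1) = p.coeff n := rfl
  have h3 : ‖n.factorial • p.coeff n‖ = (n.factorial : ℝ) * ‖p.coeff n‖ := by
    rw [nsmul_eq_mul]
    simp [norm_mul]
  rw [h2, h3]
  field_simp

lemma aux_radius_eq {f : ℂ → ℂ} {p : FormalMultilinearSeries ℂ ℂ ℂ} {x : ℂ}
    (h : HasFPowerSeriesAt f p x) {R : ℝ} (hR : 0 < R)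
    (h1 : ∀ c : ℝ, 0 ≤ c → c < R →
      Summable fun k : ℕ => ‖iteratedDeriv k f x‖ / (k.factorial : ℝ) * c ^ k)
    (h2 : ∀ c : ℝ, R < c →
      ¬ Summable fun k : ℕ => ‖iteratedDeriv k f x‖ / (k.factorial : ℝ) * c ^ k) :
    p.radius = ENNReal.ofReal R := by
  have hcoef : ∀ (c : ℝ) (k : ℕ),
      ‖iteratedDeriv k f x‖ / (k.factorial : ℝ) * c ^ k = ‖p k‖ * c ^ k := by
    intro c k; rw [aux_norm_coeff h]
  refine le_antisymm ?_ ?_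
  · by_contra hlt
    push_neg at hlt
    obtain ⟨r, hr1, hr2⟩ := ENNReal.lt_iff_exists_nnreal_btwn.1 hlt
    have hRr : R < (r : ℝ) := by
      rw [← ENNReal.ofReal_coe_nnreal] at hr1
      exact (ENNReal.ofReal_lt_ofReal_iff_of_nonneg hR.le).1 hr1
    have := p.summable_norm_mul_pow hr2
    exact h2 r hRr (by simpa only [hcoef] using this)
  · refine ENNReal.le_of_forall_nnreal_lt fun r hr => ?_
    have hrR : (r : ℝ) < R := by
      rw [← ENNReal.ofReal_coe_nnreal] at hr
      exact (ENNReal.ofReal_lt_ofReal_iff hR).1 hr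
    have := h1 r r.coe_nonneg hrR
    rw [show (fun k : ℕ => ‖iteratedDeriv k f x‖ / (k.factorial : ℝ) * (r : ℝ) ^ k)
        = fun k : ℕ => ‖p k‖ * (r : ℝ) ^ k from funext fun k => hcoef r k] at this
    exact p.le_radius_of_summable this

lemma aux_changeOrigin {f : ℂ → ℂ} {p q : FormalMultilinearSeries ℂ ℂ ℂ} {x y : ℂ} {r : ℝ≥0∞}
    (hp : HasFPowerSeriesOnBall f p x r) (hq : HasFPowerSeriesAt f q y)
    (hy : (‖y - x‖₊ : ℝ≥0∞) < r) :
    q = p.changeOrigin (y - x) ∧ p.radius - ‖y - x‖₊ ≤ q.radius := by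
  have h := hp.changeOrigin hy
  have hxy : x + (y - x) = y := by ring
  rw [hxy] at h
  have heq := hq.eq_formalMultilinearSeries h.hasFPowerSeriesAt
  exact ⟨heq, heq ▸ p.changeOrigin_radius⟩

lemma aux_eps {f : ℂ → ℂ} {px : FormalMultilinearSeries ℂ ℂ ℂ} {x : ℂ} {Rx : ℝ}
    (hpx : HasFPowerSeriesAt f px x) (hrad : px.radius = ENNReal.ofReal Rx) (hRx : 0 < Rx) :
    ∃ ε : ℝ, 0 < ε ∧ ε ≤ Rx / 2 ∧ ∀ (y : ℂ) (q : FormalMultilinearSeries ℂ ℂ ℂ) (Ry : ℝ),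
      0 ≤ Ry → HasFPowerSeriesAt f q y → q.radius = ENNReal.ofReal Ry → ‖y - x‖ < ε →
      Rx / 2 ≤ Ry := by
  obtain ⟨rr, hball⟩ := hpx
  obtain ⟨δ1, hδ1pos, hδ1lt⟩ := ENNReal.lt_iff_exists_nnreal_btwn.1 hball.r_pos
  have hδ1pos' : 0 < (δ1 : ℝ) := by exact_mod_cast hδ1pos
  refine ⟨min (δ1 : ℝ) (Rx / 2), lt_min hδ1pos' (by linarith), min_le_right _ _,
    fun y q Ry hRy hq hqrad hyx => ?_⟩
  have hnorm : ‖y - x‖ < (δ1 : ℝ) := lt_of_lt_of_le hyx (min_le_left _ _)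
  have hnn : (‖y - x‖₊ : ℝ≥0∞) < rr := by
    refine lt_trans ?_ hδ1lt
    exact_mod_cast hnorm
  obtain ⟨-, hrle⟩ := aux_changeOrigin hball hq hnn
  rw [hrad, hqrad] at hrle
  have hco : (‖y - x‖₊ : ℝ≥0∞) = ENNReal.ofReal ‖y - x‖ := (ofReal_norm _).symm
  rw [hco, ← ENNReal.ofReal_sub _ (norm_nonneg _)] at hrle
  have : Rx - ‖y - x‖ ≤ Ry := (ENNReal.ofReal_le_ofReal_iff hRy).1 hrle
  have hyx2 : ‖y - x‖ ≤ Rx / 2 := le_of_lt (lt_of_lt_of_le hyx (min_le_right _ _))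
  linarith

lemma aux_unif {f : ℂ → ℂ} {px : FormalMultilinearSeries ℂ ℂ ℂ} {x : ℂ}
    (hpx : HasFPowerSeriesAt f px x) {r : ℝ≥0} (hr : (r : ℝ≥0∞) < px.radius) :
    ∃ ε : ℝ, 0 < ε ∧ ∃ M : ℝ, ∀ (y : ℂ) (q : FormalMultilinearSeries ℂ ℂ ℂ),
      HasFPowerSeriesAt f q y → ‖y - x‖ < ε → ∀ k, ‖q k‖ * (r : ℝ) ^ k ≤ M := by
  obtain ⟨rr, hball⟩ := hpx
  obtain ⟨δ1, hδ1pos, hδ1lt⟩ := ENNReal.lt_iff_exists_nnreal_btwn.1 hball.r_pos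
  have hδ1pos' : 0 < δ1 := by exact_mod_cast hδ1pos
  obtain ⟨η, hηpos, hηlt⟩ := ENNReal.lt_iff_exists_add_pos_lt.1 hr
  set δ : ℝ≥0 := min δ1 η with hδdef
  have hδpos : 0 < δ := lt_min hδ1pos' hηpos
  have hδrr : (δ : ℝ≥0∞) < rr := lt_of_le_of_lt (by exact_mod_cast min_le_left δ1 η) hδ1lt
  have hsum' : ((δ : ℝ≥0∞) + r) < px.radius := by
    calc (δ : ℝ≥0∞) + r ≤ (η : ℝ≥0∞) + r := by
          gcongr; exact_mod_cast min_le_right δ1 η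
      _ = (r : ℝ≥0∞) + η := by rw [add_comm]
      _ < px.radius := hηlt
  have hδrad : (δ : ℝ≥0∞) < px.radius :=
    lt_of_le_of_lt (le_add_right le_rfl) hsum'
  have hg : Summable (fun s : Σ k l : ℕ, { s : Finset (Fin (k + l)) // s.card = l } =>
      ‖px (s.1 + s.2.1)‖₊ * δ ^ s.2.1 * r ^ s.1) :=
    px.changeOriginSeries_summable_aux₁ hsum'
  set T : ℝ≥0 := ∑' s : Σ k l : ℕ, { s : Finset (Fin (k + l)) // s.card = l },
      ‖px (s.1 + s.2.1)‖₊ * δ ^ s.2.1 * r ^ s.1 with hTdef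
  refine ⟨δ, by exact_mod_cast hδpos, (T : ℝ), fun y q hq hyx k => ?_⟩
  set w : ℂ := y - x with hwdef
  have hwδ : ‖w‖₊ ≤ δ := by
    rw [← NNReal.coe_le_coe]
    exact le_of_lt hyx
  have hwrr : (‖w‖₊ : ℝ≥0∞) < rr := lt_of_le_of_lt (by exact_mod_cast hwδ) hδrr
  have hwrad : (‖w‖₊ : ℝ≥0∞) < px.radius :=
    lt_of_le_of_lt (by exact_mod_cast hwδ) hδrad
  obtain ⟨hqeq, -⟩ := aux_changeOrigin hball hq hwrr
  have step1 : ‖q k‖₊ ≤ ∑' s : Σ l : ℕ, { s : Finset (Fin (k + l)) // s.card = l },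
      ‖px (k + s.1)‖₊ * ‖w‖₊ ^ s.1 := by
    rw [hqeq]
    exact px.nnnorm_changeOrigin_le k hwrad
  have step2 : (∑' s : Σ l : ℕ, { s : Finset (Fin (k + l)) // s.card = l },
      ‖px (k + s.1)‖₊ * ‖w‖₊ ^ s.1) ≤
      ∑' s : Σ l : ℕ, { s : Finset (Fin (k + l)) // s.card = l },
      ‖px (k + s.1)‖₊ * δ ^ s.1 :=
    Summable.tsum_le_tsum (fun s => by gcongr)
      (NNReal.summable_of_le (fun s => by gcongr)
        (px.changeOriginSeries_summable_aux₂ hδrad k))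
      (px.changeOriginSeries_summable_aux₂ hδrad k)
  have step3 : (∑' s : Σ l : ℕ, { s : Finset (Fin (k + l)) // s.card = l },
      ‖px (k + s.1)‖₊ * δ ^ s.1) * r ^ k ≤ T := by
    rw [← NNReal.tsum_mul_right, hTdef]
    exact NNReal.tsum_comp_le_tsum_of_inj (i := Sigma.mk k) hg sigma_mk_injective
  have : ‖q k‖₊ * r ^ k ≤ T :=
    le_trans (mul_le_mul_left (le_trans step1 step2) _) step3
  exact_mod_cast this

/-- If `f` is analytic on an open set containing the compact interval `[a,b]` with
`rc(f,x) > 0` for each `x ∈ [a,b]`, then `ρ₀ = inf_{x∈[a,b]} rc(f,x) > 0` and `ρ₀`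
equals the radius of convergence of `Σ_{k≥1} d_k z^k`, `d_k = sup_{x∈[a,b]} |f⁽ᵏ⁾(x)|/k!`. -/
theorem radius_of_sup_deriv_series_compact (f : ℂ → ℂ) (N : Set ℂ) (hN : IsOpen N)
    (a b : ℝ) (hab : a ≤ b)
    (hIN : ∀ x ∈ Set.Icc a b, (x : ℂ) ∈ N) (hf : DifferentiableOn ℂ f N)
    (rc : ℝ → ℝ)
    (hrc : ∀ x ∈ Set.Icc a b,
      (∀ c : ℝ, 0 ≤ c → c < rc x →
        Summable fun k : ℕ => ‖iteratedDeriv k f (x : ℂ)‖ / (k.factorial : ℝ) * c ^ k) ∧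
      (∀ c : ℝ, rc x < c →
        ¬ Summable fun k : ℕ => ‖iteratedDeriv k f (x : ℂ)‖ / (k.factorial : ℝ) * c ^ k))
    (hrcpos : ∀ x ∈ Set.Icc a b, 0 < rc x)
    (d : ℕ → ℝ)
    (hd : ∀ k : ℕ, 1 ≤ k →
      IsLUB ((fun x : ℝ => ‖iteratedDeriv k f (x : ℂ)‖ / (k.factorial : ℝ)) '' Set.Icc a b)
        (d k)) :
    0 < sInf (rc '' Set.Icc a b) ∧
    (∀ c : ℝ, 0 ≤ c → c < sInf (rc '' Set.Icc a b) →
      Summable fun k : ℕ => d (k + 1) * c ^ (k + 1)) ∧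
    (∀ c : ℝ, sInf (rc '' Set.Icc a b) < c →
      ¬ Summable fun k : ℕ => d (k + 1) * c ^ (k + 1)) := by
  classical
  have haI : a ∈ Set.Icc a b := ⟨le_rfl, hab⟩
  have hIne : (Set.Icc a b).Nonempty := ⟨a, haI⟩
  -- choose power series at each point
  have hax : ∀ x ∈ Set.Icc a b, AnalyticAt ℂ f (x : ℂ) := fun x hx =>
    hf.analyticAt (hN.mem_nhds (hIN x hx))
  have hex : ∀ x : ℝ, ∃ p : FormalMultilinearSeries ℂ ℂ ℂ,
      x ∈ Set.Icc a b → HasFPowerSeriesAt f p (x : ℂ) := by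
    intro x
    by_cases hx : x ∈ Set.Icc a b
    · exact ⟨(hax x hx).choose, fun _ => (hax x hx).choose_spec⟩
    · exact ⟨0, fun h => absurd h hx⟩
  choose p hp using hex
  have hprad : ∀ x ∈ Set.Icc a b, (p x).radius = ENNReal.ofReal (rc x) := fun x hx =>
    aux_radius_eq (hp x hx) (hrcpos x hx) (hrc x hx).1 (hrc x hx).2
  have hnormRR : ∀ x y : ℝ, ‖(y : ℂ) - (x : ℂ)‖ = |y - x| := by
    intro x y
    rw [← Complex.ofReal_sub, Complex.norm_real, Real.norm_eq_abs]
  -- bounds on sInf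
  have hbdd : BddBelow (rc '' Set.Icc a b) := by
    refine ⟨0, ?_⟩
    rintro z ⟨y, hy, rfl⟩
    exact (hrcpos y hy).le
  have hsinf_le : ∀ x ∈ Set.Icc a b, sInf (rc '' Set.Icc a b) ≤ rc x := fun x hx =>
    csInf_le hbdd ⟨x, hx, rfl⟩
  -- Part 1
  have hA : ∀ x : ℝ, ∃ ε : ℝ, 0 < ε ∧
      (x ∈ Set.Icc a b → ∀ y ∈ Set.Icc a b, |y - x| < ε → rc x / 2 ≤ rc y) := by
    intro x
    by_cases hx : x ∈ Set.Icc a b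
    · obtain ⟨ε, hε, -, hεprop⟩ := aux_eps (hp x hx) (hprad x hx) (hrcpos x hx)
      refine ⟨ε, hε, fun _ y hy hxy => ?_⟩
      exact hεprop (y : ℂ) (p y) (rc y) (hrcpos y hy).le (hp y hy) (hprad y hy)
        (by rw [hnormRR]; exact hxy)
    · exact ⟨1, one_pos, fun h => absurd h hx⟩
  choose ε1 hε1pos hε1prop using hA
  obtain ⟨t, hts, hcov⟩ := isCompact_Icc.elim_nhds_subcover
    (fun x => Metric.ball x (ε1 x)) (fun x _ => Metric.ball_mem_nhds x (hε1pos x))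
  obtain ⟨x0, hx0t, -⟩ := Set.mem_iUnion₂.1 (hcov haI)
  have htne : t.Nonempty := ⟨x0, hx0t⟩
  have hmpos : 0 < t.inf' htne (fun x => rc x / 2) := by
    rw [Finset.lt_inf'_iff]
    intro x hx
    have := hrcpos x (hts x hx)
    linarith
  have hlb : ∀ y ∈ Set.Icc a b, t.inf' htne (fun x => rc x / 2) ≤ rc y := by
    intro y hy
    obtain ⟨x, hxt, hyball⟩ := Set.mem_iUnion₂.1 (hcov hy)
    have hdist : |y - x| < ε1 x := by
      rw [← Real.dist_eq]; exact Metric.mem_ball.1 hyball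
    exact le_trans (Finset.inf'_le _ hxt) (hε1prop x (hts x hxt) y hy hdist)
  have h1 : 0 < sInf (rc '' Set.Icc a b) := by
    refine lt_of_lt_of_le hmpos (le_csInf (hIne.image rc) ?_)
    rintro z ⟨y, hy, rfl⟩
    exact hlb y hy
  -- d bounds
  have hdub : ∀ k, 1 ≤ k → ∀ x ∈ Set.Icc a b,
      ‖iteratedDeriv k f (x : ℂ)‖ / (k.factorial : ℝ) ≤ d k := fun k hk x hx =>
    (hd k hk).1 ⟨x, hx, rfl⟩
  have hdnn : ∀ k, 1 ≤ k → 0 ≤ d k := fun k hk =>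
    le_trans (div_nonneg (norm_nonneg _) (Nat.cast_nonneg _)) (hdub k hk a haI)
  refine ⟨h1, ?_, ?_⟩
  · -- Part 2
    intro c hc hclt
    set ρ := sInf (rc '' Set.Icc a b) with hρdef
    set r : ℝ := (c + ρ) / 2 with hrdef
    have hcr : c < r := by simp only [hrdef]; linarith
    have hrρ : r < ρ := by simp only [hrdef]; linarith
    have hrpos : 0 < r := lt_of_le_of_lt hc hcr
    set r' : ℝ≥0 := r.toNNReal with hr'def
    have hr'r : (r' : ℝ) = r := Real.coe_toNNReal r hrpos.le
    have hB : ∀ x : ℝ, ∃ ε : ℝ, 0 < ε ∧ ∃ M : ℝ, x ∈ Set.Icc a b →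
        ∀ y ∈ Set.Icc a b, |y - x| < ε → ∀ k,
          ‖iteratedDeriv k f (y : ℂ)‖ / (k.factorial : ℝ) * r ^ k ≤ M := by
      intro x
      by_cases hx : x ∈ Set.Icc a b
      · have hrlt : (r' : ℝ≥0∞) < (p x).radius := by
          rw [hprad x hx]
          have : (r' : ℝ≥0∞) = ENNReal.ofReal r := rfl
          rw [this]
          exact (ENNReal.ofReal_lt_ofReal_iff (hrcpos x hx)).2
            (lt_of_lt_of_le hrρ (hsinf_le x hx))
        obtain ⟨ε, hεpos, M, hM⟩ := aux_unif (hp x hx) hrlt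
        refine ⟨ε, hεpos, M, fun _ y hy hxy k => ?_⟩
        have h' := hM (y : ℂ) (p y) (hp y hy) (by rw [hnormRR]; exact hxy) k
        rw [aux_norm_coeff (hp y hy) k, hr'r] at h'
        exact h'
      · exact ⟨1, one_pos, 0, fun h => absurd h hx⟩
    choose ε2 hε2pos M2 hM2 using hB
    obtain ⟨t2, ht2s, hcov2⟩ := isCompact_Icc.elim_nhds_subcover
      (fun x => Metric.ball x (ε2 x)) (fun x _ => Metric.ball_mem_nhds x (hε2pos x))
    obtain ⟨x1, hx1t, -⟩ := Set.mem_iUnion₂.1 (hcov2 haI)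
    have ht2ne : t2.Nonempty := ⟨x1, hx1t⟩
    set M : ℝ := t2.sup' ht2ne M2 with hMdef
    have hrpow : ∀ k : ℕ, (0 : ℝ) < r ^ k := fun k => pow_pos hrpos k
    have hdk : ∀ k, 1 ≤ k → d k ≤ M / r ^ k := by
      intro k hk
      refine (hd k hk).2 ?_
      rintro z ⟨y, hy, rfl⟩
      obtain ⟨x, hxt, hyball⟩ := Set.mem_iUnion₂.1 (hcov2 hy)
      have hdist : |y - x| < ε2 x := by
        rw [← Real.dist_eq]; exact Metric.mem_ball.1 hyball
      have := hM2 x (ht2s x hxt) y hy hdist k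
      have hMle : M2 x ≤ M := Finset.le_sup' _ hxt
      rw [le_div_iff₀ (hrpow k)]
      exact le_trans this hMle
    have hcrlt : c / r < 1 := (div_lt_one hrpos).2 hcr
    have hcrnn : 0 ≤ c / r := div_nonneg hc hrpos.le
    have hgeo : Summable (fun k : ℕ => (M * (c / r)) * (c / r) ^ k) :=
      (summable_geometric_of_lt_one hcrnn hcrlt).mul_left _
    refine Summable.of_nonneg_of_le
      (fun k => mul_nonneg (hdnn (k + 1) (Nat.le_add_left 1 k))
        (pow_nonneg hc _)) (fun k => ?_) hgeo
    have hstep : d (k + 1) * c ^ (k + 1) ≤ (M / r ^ (k + 1)) * c ^ (k + 1) :=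
      mul_le_mul_of_nonneg_right (hdk (k + 1) (Nat.le_add_left 1 k)) (pow_nonneg hc _)
    refine le_trans hstep (le_of_eq ?_)
    have hrne : r ≠ 0 := hrpos.ne'
    clear_value r
    rw [div_pow, pow_succ r, pow_succ c]
    field_simp
  · -- Part 3
    intro c hclt hsum
    obtain ⟨z, ⟨x, hx, rfl⟩, hrcx⟩ := exists_lt_of_csInf_lt (hIne.image rc) hclt
    have hcpos : 0 < c := lt_trans h1 hclt
    refine (hrc x hx).2 c hrcx ?_
    have hsum' : Summable fun k : ℕ =>
        ‖iteratedDeriv (k + 1) f (x : ℂ)‖ / ((k + 1).factorial : ℝ) * c ^ (k + 1) := by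
      refine Summable.of_nonneg_of_le (fun k => ?_) (fun k => ?_) hsum
      · exact mul_nonneg (div_nonneg (norm_nonneg _) (Nat.cast_nonneg _))
          (pow_nonneg hcpos.le _)
      · exact mul_le_mul_of_nonneg_right
          (hdub (k + 1) (Nat.le_add_left 1 k) x hx) (pow_nonneg hcpos.le _)
    exact (summable_nat_add_iff 1).1 hsum'
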